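/- arXiv:1601.03279 — 3 statements merged into one kernel-verified Lean document; each statement's English description precedes it below -/
import Mathlib

section
/- For a linear function v on the triangle K with vertices (x_i,y_j), (x_{i+1},y_j), (x_i,y_{j+1}) (where h_x = x_{i+1}-x_i > 0 and h_y = y_{j+1}-y_j > 0), the linear interpolant w^I of a smooth function w (interpolating at the three vertices) satisfies ∫_K (w - w^I) dx dy = w_{xx}(x_i,y_j)·(−h_x³ h_y/24) + w_{xy}(x_i,y_j)·(h_x² h_y²/24) + w_{yy}(x_i,y_j)·(−h_x h_y³/24) + R, where |R| ≤ C·(area of K)·Σ_{l+m=3} h_x^l h_y^m · sup_K |∂_x^l ∂_y^m w| for a constant C independent of w, h_x, h_y. -/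
open MeasureTheory Set

/-- partial derivative in the first (x) variable -/
noncomputable def pdx (f : ℝ × ℝ → ℝ) : ℝ × ℝ → ℝ := fun p => deriv (fun t => f (t, p.2)) p.1

/-- partial derivative in the second (y) variable -/
noncomputable def pdy (f : ℝ × ℝ → ℝ) : ℝ × ℝ → ℝ := fun p => deriv (fun t => f (p.1, t)) p.2

/-- the closed right triangle with vertices `(xi,yj)`, `(xi+hx,yj)`, `(xi,yj+hy)` -/
def tri (xi yj hx hy : ℝ) : Set (ℝ × ℝ) :=
  {p | xi ≤ p.1 ∧ yj ≤ p.2 ∧ (p.1 - xi) / hx + (p.2 - yj) / hy ≤ 1}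

/-- the affine interpolant of `w` at the vertices of `tri xi yj hx hy`,
written in barycentric coordinates -/
noncomputable def interp (w : ℝ × ℝ → ℝ) (xi yj hx hy : ℝ) : ℝ × ℝ → ℝ :=
  fun p => w (xi, yj) * (1 - (p.1 - xi) / hx - (p.2 - yj) / hy)
    + w (xi + hx, yj) * ((p.1 - xi) / hx) + w (xi, yj + hy) * ((p.2 - yj) / hy)

lemma hasDerivAt_pdx {f : ℝ × ℝ → ℝ} {p : ℝ × ℝ} (hf : DifferentiableAt ℝ f p) :
    HasDerivAt (fun t => f (t, p.2)) (pdx f p) p.1 := by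
  have h : DifferentiableAt ℝ (fun t : ℝ => f (t, p.2)) p.1 :=
    hf.comp p.1 (differentiableAt_id.prodMk (differentiableAt_const _))
  exact h.hasDerivAt

lemma hasDerivAt_pdy {f : ℝ × ℝ → ℝ} {p : ℝ × ℝ} (hf : DifferentiableAt ℝ f p) :
    HasDerivAt (fun t => f (p.1, t)) (pdy f p) p.2 := by
  have h : DifferentiableAt ℝ (fun t : ℝ => f (p.1, t)) p.2 :=
    hf.comp p.2 ((differentiableAt_const _).prodMk differentiableAt_id)
  exact h.hasDerivAt

lemma pdx_eq_fderiv {f : ℝ × ℝ → ℝ} (hf : Differentiable ℝ f) :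
    pdx f = fun p => fderiv ℝ f p (1, 0) := by
  funext p
  have h1 : HasDerivAt (fun t : ℝ => (t, p.2)) ((1 : ℝ), (0 : ℝ)) p.1 :=
    (hasDerivAt_id p.1).prodMk (hasDerivAt_const _ _)
  have := ((hf p).hasFDerivAt.comp_hasDerivAt p.1 h1)
  exact this.deriv

lemma pdy_eq_fderiv {f : ℝ × ℝ → ℝ} (hf : Differentiable ℝ f) :
    pdy f = fun p => fderiv ℝ f p (0, 1) := by
  funext p
  have h1 : HasDerivAt (fun t : ℝ => (p.1, t)) ((0 : ℝ), (1 : ℝ)) p.2 :=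
    (hasDerivAt_const _ _).prodMk (hasDerivAt_id p.2)
  exact ((hf p).hasFDerivAt.comp_hasDerivAt p.2 h1).deriv

lemma contDiff_pdx {f : ℝ × ℝ → ℝ} {n : ℕ} (hf : ContDiff ℝ (n + 1 : ℕ) f) :
    ContDiff ℝ (n : ℕ) (pdx f) := by
  rw [pdx_eq_fderiv (hf.differentiable (by simp))]
  exact (hf.fderiv_right (by exact_mod_cast le_refl _)).clm_apply contDiff_const

lemma contDiff_pdy {f : ℝ × ℝ → ℝ} {n : ℕ} (hf : ContDiff ℝ (n + 1 : ℕ) f) :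
    ContDiff ℝ (n : ℕ) (pdy f) := by
  rw [pdy_eq_fderiv (hf.differentiable (by simp))]
  exact (hf.fderiv_right (by exact_mod_cast le_refl _)).clm_apply contDiff_const

lemma mvt {f f' : ℝ → ℝ} {a b C : ℝ} (hab : a ≤ b)
    (hd : ∀ t ∈ Icc a b, HasDerivAt f (f' t) t)
    (hC : ∀ t ∈ Icc a b, |f' t| ≤ C) :
    |f b - f a| ≤ C * (b - a) := by
  have := (convex_Icc a b).norm_image_sub_le_of_norm_hasDerivWithin_le
    (fun t ht => (hd t ht).hasDerivWithinAt) hC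
    (left_mem_Icc.mpr hab) (right_mem_Icc.mpr hab)
  simpa [Real.norm_eq_abs, abs_of_nonneg (sub_nonneg.mpr hab)] using this

lemma tri_isClosed (xi yj hx hy : ℝ) : IsClosed (tri xi yj hx hy) := by
  have h1 : IsClosed {p : ℝ × ℝ | xi ≤ p.1} := isClosed_le continuous_const continuous_fst
  have h2 : IsClosed {p : ℝ × ℝ | yj ≤ p.2} := isClosed_le continuous_const continuous_snd
  have h3 : IsClosed {p : ℝ × ℝ | (p.1 - xi) / hx + (p.2 - yj) / hy ≤ 1} :=
    isClosed_le (by fun_prop) continuous_const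
  exact (h1.inter (h2.inter h3))

lemma tri_subset_Icc {xi yj hx hy : ℝ} (hx0 : 0 < hx) (hy0 : 0 < hy) :
    tri xi yj hx hy ⊆ Icc (xi, yj) (xi + hx, yj + hy) := by
  rintro ⟨x, y⟩ ⟨h1, h2, h3⟩
  simp only [tri, mem_setOf_eq] at h1 h2 h3
  have hxle : (x - xi) / hx ≤ 1 := by
    have : 0 ≤ (y - yj) / hy := div_nonneg (by linarith) hy0.le
    linarith
  have hyle : (y - yj) / hy ≤ 1 := by
    have : 0 ≤ (x - xi) / hx := div_nonneg (by linarith) hx0.le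
    linarith
  rw [div_le_one hx0] at hxle
  rw [div_le_one hy0] at hyle
  simp only [mem_Icc, Prod.le_def]
  exact ⟨⟨h1, h2⟩, ⟨by linarith, by linarith⟩⟩

lemma tri_isCompact {xi yj hx hy : ℝ} (hx0 : 0 < hx) (hy0 : 0 < hy) :
    IsCompact (tri xi yj hx hy) :=
  isCompact_Icc.of_isClosed_subset (tri_isClosed _ _ _ _) (tri_subset_Icc hx0 hy0)

lemma integral_tri {xi yj hx hy : ℝ} (hx0 : 0 < hx) (hy0 : 0 < hy) (f : ℝ × ℝ → ℝ)
    (hf : Continuous f) :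
    ∫ p in tri xi yj hx hy, f p
      = ∫ x in xi..(xi + hx), ∫ y in yj..(yj + hy * (1 - (x - xi) / hx)), f (x, y) := by
  classical
  have hmeas : MeasurableSet (tri xi yj hx hy) := (tri_isClosed xi yj hx hy).measurableSet
  have hIntOn : IntegrableOn f (tri xi yj hx hy) :=
    hf.continuousOn.integrableOn_compact (tri_isCompact hx0 hy0)
  have hind : Integrable ((tri xi yj hx hy).indicator f) :=
    (integrable_indicator_iff hmeas).mpr hIntOn
  set g : ℝ → ℝ := fun x => yj + hy * (1 - (x - xi) / hx) with hg
  have key : ∀ x : ℝ, (∫ y, (tri xi yj hx hy).indicator f (x, y))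
      = (Icc xi (xi + hx)).indicator (fun x => ∫ y in yj..(g x), f (x, y)) x := by
    intro x
    by_cases hx1 : x ∈ Icc xi (xi + hx)
    · have hslice : ∀ y : ℝ, (tri xi yj hx hy).indicator f (x, y)
          = (Icc yj (g x)).indicator (fun y => f (x, y)) y := by
        intro y
        rw [Set.indicator_apply, Set.indicator_apply]
        congr 1
        simp only [tri, mem_setOf_eq, mem_Icc, eq_iff_iff]
        constructor
        · rintro ⟨-, h2, h3⟩
          refine ⟨h2, ?_⟩
          have : (y - yj) / hy ≤ 1 - (x - xi) / hx := by linarith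
          rw [div_le_iff₀ hy0] at this
          simp only [hg]; linarith [this]
        · rintro ⟨h2, h3⟩
          refine ⟨hx1.1, h2, ?_⟩
          have h5 : y - yj ≤ hy * (1 - (x - xi) / hx) := by simp only [hg] at h3; linarith
          have h4 : (y - yj) / hy ≤ 1 - (x - xi) / hx :=
            (div_le_iff₀ hy0).mpr (by linarith [mul_comm hy (1 - (x - xi) / hx)])
          linarith
      have hgy : yj ≤ g x := by
        have h1 : (x - xi) / hx ≤ 1 := by
          rw [div_le_one hx0]; linarith [hx1.2]
        have : 0 ≤ hy * (1 - (x - xi) / hx) := mul_nonneg hy0.le (by linarith)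
        simp only [hg]; linarith
      rw [Set.indicator_of_mem hx1]
      simp only [hslice]
      rw [integral_indicator measurableSet_Icc, integral_Icc_eq_integral_Ioc,
        intervalIntegral.integral_of_le hgy]
    · have hslice : ∀ y : ℝ, (tri xi yj hx hy).indicator f (x, y) = 0 := by
        intro y
        apply Set.indicator_of_notMem
        simp only [tri, mem_setOf_eq, not_and_or]
        rcases lt_or_ge x xi with h | h
        · left; linarith
        · have hxgt : xi + hx < x := by
            rcases lt_or_ge (xi + hx) x with h' | h'
            · exact h'
            · exact absurd ⟨h, h'⟩ hx1
          right
          by_cases hy1 : yj ≤ y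
          · right
            have h1 : 1 < (x - xi) / hx := by rw [lt_div_iff₀ hx0]; linarith
            have h2 : 0 ≤ (y - yj) / hy := div_nonneg (by linarith) hy0.le
            linarith
          · left; exact hy1
      rw [Set.indicator_of_notMem hx1]
      simp only [hslice, integral_zero]
  calc ∫ p in tri xi yj hx hy, f p = ∫ p, (tri xi yj hx hy).indicator f p :=
        (integral_indicator hmeas).symm
    _ = ∫ x, ∫ y, (tri xi yj hx hy).indicator f (x, y) :=
        MeasureTheory.integral_prod _ hind
    _ = ∫ x, (Icc xi (xi + hx)).indicator (fun x => ∫ y in yj..(g x), f (x, y)) x := by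
        simp only [key]
    _ = ∫ x in xi..(xi + hx), ∫ y in yj..(g x), f (x, y) := by
        rw [integral_indicator measurableSet_Icc, integral_Icc_eq_integral_Ioc,
          intervalIntegral.integral_of_le (by linarith : xi ≤ xi + hx)]

lemma int_shift_pow (a b : ℝ) (n : ℕ) : ∫ t in a..b, (t - a) ^ n = (b - a) ^ (n + 1) / (n + 1) := by
  rw [show (fun t : ℝ => (t - a) ^ n) = fun t => (fun s : ℝ => s ^ n) (t - a) from rfl,
    intervalIntegral.integral_comp_sub_right (fun s : ℝ => s ^ n) a]
  simp [integral_pow]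

lemma int_cubic (a b d0 d1 d2 d3 : ℝ) :
    ∫ y in a..b, (d0 + d1 * (y - a) + d2 * (y - a) ^ 2 + d3 * (y - a) ^ 3)
      = d0 * (b - a) + d1 * ((b - a) ^ 2 / 2) + d2 * ((b - a) ^ 3 / 3) + d3 * ((b - a) ^ 4 / 4) := by
  have i0 : IntervalIntegrable (fun _ : ℝ => d0) volume a b := intervalIntegrable_const
  have i1 : IntervalIntegrable (fun y : ℝ => d1 * (y - a)) volume a b :=
    (by continuity : Continuous fun y : ℝ => d1 * (y - a)).intervalIntegrable a b
  have i2 : IntervalIntegrable (fun y : ℝ => d2 * (y - a) ^ 2) volume a b :=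
    (by continuity : Continuous fun y : ℝ => d2 * (y - a) ^ 2).intervalIntegrable a b
  have i3 : IntervalIntegrable (fun y : ℝ => d3 * (y - a) ^ 3) volume a b :=
    (by continuity : Continuous fun y : ℝ => d3 * (y - a) ^ 3).intervalIntegrable a b
  rw [intervalIntegral.integral_add ((i0.add i1).add i2) i3,
    intervalIntegral.integral_add (i0.add i1) i2, intervalIntegral.integral_add i0 i1,
    intervalIntegral.integral_const, intervalIntegral.integral_const_mul,
    intervalIntegral.integral_const_mul, intervalIntegral.integral_const_mul]
  have e1 : ∫ y in a..b, (y - a) = (b - a) ^ 2 / 2 := by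
    have := int_shift_pow a b 1; norm_num at this; simpa using this
  rw [e1, int_shift_pow a b 2, int_shift_pow a b 3]
  simp only [smul_eq_mul]
  push_cast
  ring

lemma main_integral {xi yj hx hy : ℝ} (c3 c4 c5 : ℝ) (hx0 : 0 < hx) (hy0 : 0 < hy) :
    ∫ p in tri xi yj hx hy, (c3 * ((p.1 - xi) ^ 2 - hx * (p.1 - xi)) / 2
        + c4 * (p.1 - xi) * (p.2 - yj) + c5 * ((p.2 - yj) ^ 2 - hy * (p.2 - yj)) / 2)
      = c3 * (-(hx ^ 3 * hy) / 24) + c4 * (hx ^ 2 * hy ^ 2 / 24) + c5 * (-(hx * hy ^ 3) / 24) := by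
  rw [integral_tri hx0 hy0 _ (by continuity)]
  have inner : ∀ x : ℝ,
      (∫ y in yj..(yj + hy * (1 - (x - xi) / hx)),
        (c3 * ((x - xi) ^ 2 - hx * (x - xi)) / 2 + c4 * (x - xi) * (y - yj)
          + c5 * ((y - yj) ^ 2 - hy * (y - yj)) / 2))
      = (c3 * ((x - xi) ^ 2 - hx * (x - xi)) / 2) * (hy * (1 - (x - xi) / hx))
        + (c4 * (x - xi) - c5 * hy / 2) * ((hy * (1 - (x - xi) / hx)) ^ 2 / 2)
        + (c5 / 2) * ((hy * (1 - (x - xi) / hx)) ^ 3 / 3) := by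
    intro x
    have hfun : (fun y : ℝ => c3 * ((x - xi) ^ 2 - hx * (x - xi)) / 2 + c4 * (x - xi) * (y - yj)
          + c5 * ((y - yj) ^ 2 - hy * (y - yj)) / 2)
        = fun y : ℝ => (c3 * ((x - xi) ^ 2 - hx * (x - xi)) / 2)
          + (c4 * (x - xi) - c5 * hy / 2) * (y - yj) + (c5 / 2) * (y - yj) ^ 2
          + (0 : ℝ) * (y - yj) ^ 3 := funext fun y => by ring
    rw [hfun, int_cubic]
    have : yj + hy * (1 - (x - xi) / hx) - yj = hy * (1 - (x - xi) / hx) := by ring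
    rw [this]
    ring
  simp only [inner]
  have houter : (fun x : ℝ =>
      (c3 * ((x - xi) ^ 2 - hx * (x - xi)) / 2) * (hy * (1 - (x - xi) / hx))
        + (c4 * (x - xi) - c5 * hy / 2) * ((hy * (1 - (x - xi) / hx)) ^ 2 / 2)
        + (c5 / 2) * ((hy * (1 - (x - xi) / hx)) ^ 3 / 3))
      = fun x : ℝ => (-c5 * hy ^ 3 / 12)
        + (-(c3 * hx * hy) / 2 + c4 * hy ^ 2 / 2) * (x - xi)
        + (c3 * hy - c4 * hy * (hy / hx) + c5 * hy * (hy / hx) ^ 2 / 4) * (x - xi) ^ 2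
        + (-(c3 * (hy / hx)) / 2 + c4 * (hy / hx) ^ 2 / 2 - c5 * (hy / hx) ^ 3 / 6) * (x - xi) ^ 3 := by
    funext x
    field_simp
    ring
  rw [houter, int_cubic]
  have h1 : xi + hx - xi = hx := by ring
  rw [h1]
  field_simp
  ring

lemma tri_down {xi yj hx hy x y s t : ℝ} (hx0 : 0 < hx) (hy0 : 0 < hy)
    (h : (x, y) ∈ tri xi yj hx hy) (hs : xi ≤ s) (hsx : s ≤ x) (ht : yj ≤ t) (hty : t ≤ y) :
    (s, t) ∈ tri xi yj hx hy := by
  obtain ⟨h1, h2, h3⟩ := h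
  refine ⟨hs, ht, le_trans ?_ h3⟩
  gcongr

lemma mem_tri_vertex {xi yj hx hy : ℝ} (hx0 : 0 < hx) (hy0 : 0 < hy) :
    (xi, yj) ∈ tri xi yj hx hy :=
  ⟨le_refl _, le_refl _, by simp⟩

lemma taylor_bound {w : ℝ × ℝ → ℝ} {xi yj hx hy M30 M21 M12 M03 : ℝ}
    (hx0 : 0 < hx) (hy0 : 0 < hy) (hw : ContDiff ℝ 3 w)
    (h30 : ∀ p ∈ tri xi yj hx hy, |pdx (pdx (pdx w)) p| ≤ M30)
    (h21 : ∀ p ∈ tri xi yj hx hy, |pdy (pdx (pdx w)) p| ≤ M21)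
    (h12 : ∀ p ∈ tri xi yj hx hy, |pdy (pdy (pdx w)) p| ≤ M12)
    (h03 : ∀ p ∈ tri xi yj hx hy, |pdy (pdy (pdy w)) p| ≤ M03) :
    ∀ p ∈ tri xi yj hx hy,
      |w p - (w (xi, yj) + pdx w (xi, yj) * (p.1 - xi) + pdy w (xi, yj) * (p.2 - yj)
        + pdx (pdx w) (xi, yj) * (p.1 - xi) ^ 2 / 2
        + pdy (pdx w) (xi, yj) * ((p.1 - xi) * (p.2 - yj))
        + pdy (pdy w) (xi, yj) * (p.2 - yj) ^ 2 / 2)|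
      ≤ hx ^ 3 * M30 + hx ^ 2 * hy * M21 + hx * hy ^ 2 * M12 + hy ^ 3 * M03 := by
  have hw' : ContDiff ℝ ((3 : ℕ) : ℕ∞) w := by exact_mod_cast hw
  have hwd : Differentiable ℝ w := hw'.differentiable (by norm_num)
  have hpx : ContDiff ℝ ((2 : ℕ) : ℕ∞) (pdx w) := contDiff_pdx hw'
  have hpy : ContDiff ℝ ((2 : ℕ) : ℕ∞) (pdy w) := contDiff_pdy hw'
  have hpxd : Differentiable ℝ (pdx w) := hpx.differentiable (by norm_num)
  have hpyd : Differentiable ℝ (pdy w) := hpy.differentiable (by norm_num)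
  have hpxx : ContDiff ℝ ((1 : ℕ) : ℕ∞) (pdx (pdx w)) := contDiff_pdx hpx
  have hpyx : ContDiff ℝ ((1 : ℕ) : ℕ∞) (pdy (pdx w)) := contDiff_pdy hpx
  have hpyy : ContDiff ℝ ((1 : ℕ) : ℕ∞) (pdy (pdy w)) := contDiff_pdy hpy
  have hpxxd : Differentiable ℝ (pdx (pdx w)) := hpxx.differentiable (by norm_num)
  have hpyxd : Differentiable ℝ (pdy (pdx w)) := hpyx.differentiable (by norm_num)
  have hpyyd : Differentiable ℝ (pdy (pdy w)) := hpyy.differentiable (by norm_num)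
  have hv : (xi, yj) ∈ tri xi yj hx hy := mem_tri_vertex hx0 hy0
  have hM30 : 0 ≤ M30 := le_trans (abs_nonneg _) (h30 _ hv)
  have hM21 : 0 ≤ M21 := le_trans (abs_nonneg _) (h21 _ hv)
  have hM12 : 0 ≤ M12 := le_trans (abs_nonneg _) (h12 _ hv)
  have hM03 : 0 ≤ M03 := le_trans (abs_nonneg _) (h03 _ hv)
  rintro ⟨x, y⟩ hp
  have hIcc := (tri_subset_Icc hx0 hy0) hp
  simp only [mem_Icc, Prod.le_def] at hIcc
  obtain ⟨⟨hxl, hyl⟩, ⟨hxu, hyu⟩⟩ := hIcc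
  simp only
  -- L1
  have L1 : ∀ s ∈ Icc xi x, |pdx (pdx w) (s, y) - pdx (pdx w) (xi, yj)| ≤ M30 * hx + M21 * hy := by
    intro s hs
    have e1 := mvt (f := fun u => pdx (pdx w) (u, yj))
      (f' := fun u => pdx (pdx (pdx w)) (u, yj)) (C := M30) hs.1
      (fun u _ => hasDerivAt_pdx (hpxxd (u, yj)))
      (fun u hu => h30 _ (tri_down hx0 hy0 hp hu.1 (le_trans hu.2 hs.2) (le_refl _) hyl))
    have e1' : |pdx (pdx w) (s, yj) - pdx (pdx w) (xi, yj)| ≤ M30 * (s - xi) := e1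
    have e2 := mvt (f := fun t => pdx (pdx w) (s, t))
      (f' := fun t => pdy (pdx (pdx w)) (s, t)) (C := M21) hyl
      (fun t _ => hasDerivAt_pdy (hpxxd (s, t)))
      (fun t ht => h21 _ (tri_down hx0 hy0 hp hs.1 hs.2 ht.1 ht.2))
    have e2' : |pdx (pdx w) (s, y) - pdx (pdx w) (s, yj)| ≤ M21 * (y - yj) := e2
    have d1 : M30 * (s - xi) ≤ M30 * hx :=
      mul_le_mul_of_nonneg_left (by linarith [hs.2]) hM30
    have d2 : M21 * (y - yj) ≤ M21 * hy := mul_le_mul_of_nonneg_left (by linarith) hM21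
    calc |pdx (pdx w) (s, y) - pdx (pdx w) (xi, yj)|
        ≤ |pdx (pdx w) (s, y) - pdx (pdx w) (s, yj)|
          + |pdx (pdx w) (s, yj) - pdx (pdx w) (xi, yj)| := abs_sub_le _ _ _
      _ ≤ M30 * hx + M21 * hy := by linarith
  -- L2
  have L2 : ∀ t ∈ Icc yj y, |pdy (pdx w) (xi, t) - pdy (pdx w) (xi, yj)| ≤ M12 * hy := by
    intro t ht
    have e := mvt (f := fun t => pdy (pdx w) (xi, t))
      (f' := fun t => pdy (pdy (pdx w)) (xi, t)) (C := M12) ht.1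
      (fun u _ => hasDerivAt_pdy (hpyxd (xi, u)))
      (fun u hu => h12 _ (tri_down hx0 hy0 hp (le_refl _) hxl hu.1 (le_trans hu.2 ht.2)))
    have e' : |pdy (pdx w) (xi, t) - pdy (pdx w) (xi, yj)| ≤ M12 * (t - yj) := e
    have : M12 * (t - yj) ≤ M12 * hy :=
      mul_le_mul_of_nonneg_left (by linarith [ht.2]) hM12
    linarith
  -- L3
  have L3 : |pdx w (xi, y) - pdx w (xi, yj) - pdy (pdx w) (xi, yj) * (y - yj)| ≤ M12 * hy * (y - yj) := by
    have hd : ∀ t ∈ Icc yj y, HasDerivAt (fun t => pdx w (xi, t) - pdy (pdx w) (xi, yj) * t)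
        (pdy (pdx w) (xi, t) - pdy (pdx w) (xi, yj)) t := by
      intro t _
      exact (hasDerivAt_pdy (hpxd (xi, t))).sub
        (by simpa using (hasDerivAt_id t).const_mul (pdy (pdx w) (xi, yj)))
    have e := mvt (C := M12 * hy) hyl hd (fun t ht => L2 t ht)
    have e' : |pdx w (xi, y) - pdy (pdx w) (xi, yj) * y
        - (pdx w (xi, yj) - pdy (pdx w) (xi, yj) * yj)| ≤ M12 * hy * (y - yj) := e
    have eq : pdx w (xi, y) - pdx w (xi, yj) - pdy (pdx w) (xi, yj) * (y - yj)
        = pdx w (xi, y) - pdy (pdx w) (xi, yj) * y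
          - (pdx w (xi, yj) - pdy (pdx w) (xi, yj) * yj) := by ring
    rw [eq]; exact e'
  -- L4
  have L4 : ∀ s ∈ Icc xi x, |pdx w (s, y) - (pdx w (xi, yj) + pdx (pdx w) (xi, yj) * (s - xi)
      + pdy (pdx w) (xi, yj) * (y - yj))| ≤ M12 * hy ^ 2 + (M30 * hx + M21 * hy) * hx := by
    intro s hs
    have hd : ∀ u ∈ Icc xi s, HasDerivAt (fun u => pdx w (u, y) - pdx (pdx w) (xi, yj) * u)
        (pdx (pdx w) (u, y) - pdx (pdx w) (xi, yj)) u := by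
      intro u _
      exact (hasDerivAt_pdx (hpxd (u, y))).sub
        (by simpa using (hasDerivAt_id u).const_mul (pdx (pdx w) (xi, yj)))
    have e := mvt (C := M30 * hx + M21 * hy) hs.1 hd
      (fun u hu => L1 u ⟨hu.1, le_trans hu.2 hs.2⟩)
    have e' : |pdx w (s, y) - pdx (pdx w) (xi, yj) * s
        - (pdx w (xi, y) - pdx (pdx w) (xi, yj) * xi)| ≤ (M30 * hx + M21 * hy) * (s - xi) := e
    have d1 : (M30 * hx + M21 * hy) * (s - xi) ≤ (M30 * hx + M21 * hy) * hx := by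
      apply mul_le_mul_of_nonneg_left (by linarith [hs.2])
      have : 0 ≤ M30 * hx := mul_nonneg hM30 hx0.le
      have : 0 ≤ M21 * hy := mul_nonneg hM21 hy0.le
      linarith
    have d2 : M12 * hy * (y - yj) ≤ M12 * hy ^ 2 := by
      have : M12 * hy * (y - yj) ≤ M12 * hy * hy :=
        mul_le_mul_of_nonneg_left (by linarith) (mul_nonneg hM12 hy0.le)
      nlinarith
    have eq : pdx w (s, y) - (pdx w (xi, yj) + pdx (pdx w) (xi, yj) * (s - xi)
        + pdy (pdx w) (xi, yj) * (y - yj))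
        = (pdx w (s, y) - pdx (pdx w) (xi, yj) * s
            - (pdx w (xi, y) - pdx (pdx w) (xi, yj) * xi))
          + (pdx w (xi, y) - pdx w (xi, yj) - pdy (pdx w) (xi, yj) * (y - yj)) := by ring
    rw [eq]
    calc |_ + _| ≤ _ := abs_add_le _ _
      _ ≤ M12 * hy ^ 2 + (M30 * hx + M21 * hy) * hx := by linarith [L3]
  -- L5
  have L5 : |w (x, y) - w (xi, y) - (pdx w (xi, yj) + pdy (pdx w) (xi, yj) * (y - yj)) * (x - xi)
      - pdx (pdx w) (xi, yj) * (x - xi) ^ 2 / 2|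
      ≤ (M12 * hy ^ 2 + (M30 * hx + M21 * hy) * hx) * hx := by
    have hd : ∀ s ∈ Icc xi x, HasDerivAt
        (fun s => w (s, y) - (pdx w (xi, yj) + pdy (pdx w) (xi, yj) * (y - yj)) * s
          - pdx (pdx w) (xi, yj) * (s - xi) ^ 2 / 2)
        (pdx w (s, y) - (pdx w (xi, yj) + pdx (pdx w) (xi, yj) * (s - xi)
          + pdy (pdx w) (xi, yj) * (y - yj))) s := by
      intro s _
      have h1 : HasDerivAt (fun s => w (s, y)) (pdx w (s, y)) s := hasDerivAt_pdx (hwd (s, y))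
      have h2 : HasDerivAt (fun s : ℝ => (pdx w (xi, yj) + pdy (pdx w) (xi, yj) * (y - yj)) * s)
          (pdx w (xi, yj) + pdy (pdx w) (xi, yj) * (y - yj)) s := by
        simpa using (hasDerivAt_id s).const_mul (pdx w (xi, yj) + pdy (pdx w) (xi, yj) * (y - yj))
      have h3 : HasDerivAt (fun s : ℝ => pdx (pdx w) (xi, yj) * (s - xi) ^ 2 / 2)
          (pdx (pdx w) (xi, yj) * (s - xi)) s := by
        have := ((((hasDerivAt_id s).sub_const xi).fun_pow 2).const_mul
          (pdx (pdx w) (xi, yj))).div_const 2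
        refine this.congr_deriv ?_
        simp
        ring
      have := (h1.sub h2).sub h3
      refine this.congr_deriv ?_
      ring
    have e := mvt (C := M12 * hy ^ 2 + (M30 * hx + M21 * hy) * hx) hxl hd L4
    have e' : |w (x, y) - (pdx w (xi, yj) + pdy (pdx w) (xi, yj) * (y - yj)) * x
        - pdx (pdx w) (xi, yj) * (x - xi) ^ 2 / 2
        - (w (xi, y) - (pdx w (xi, yj) + pdy (pdx w) (xi, yj) * (y - yj)) * xi
          - pdx (pdx w) (xi, yj) * (xi - xi) ^ 2 / 2)|
        ≤ (M12 * hy ^ 2 + (M30 * hx + M21 * hy) * hx) * (x - xi) := e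
    have d1 : (M12 * hy ^ 2 + (M30 * hx + M21 * hy) * hx) * (x - xi)
        ≤ (M12 * hy ^ 2 + (M30 * hx + M21 * hy) * hx) * hx := by
      apply mul_le_mul_of_nonneg_left (by linarith)
      have n1 : 0 ≤ M12 * hy ^ 2 := mul_nonneg hM12 (sq_nonneg _)
      have n2 : 0 ≤ (M30 * hx + M21 * hy) * hx :=
        mul_nonneg (by positivity) hx0.le
      linarith
    have eq : w (x, y) - w (xi, y) - (pdx w (xi, yj) + pdy (pdx w) (xi, yj) * (y - yj)) * (x - xi)
        - pdx (pdx w) (xi, yj) * (x - xi) ^ 2 / 2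
        = w (x, y) - (pdx w (xi, yj) + pdy (pdx w) (xi, yj) * (y - yj)) * x
          - pdx (pdx w) (xi, yj) * (x - xi) ^ 2 / 2
          - (w (xi, y) - (pdx w (xi, yj) + pdy (pdx w) (xi, yj) * (y - yj)) * xi
            - pdx (pdx w) (xi, yj) * (xi - xi) ^ 2 / 2) := by ring
    rw [eq]; linarith
  -- L6a
  have L6a : ∀ t ∈ Icc yj y, |pdy (pdy w) (xi, t) - pdy (pdy w) (xi, yj)| ≤ M03 * hy := by
    intro t ht
    have e := mvt (f := fun t => pdy (pdy w) (xi, t))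
      (f' := fun t => pdy (pdy (pdy w)) (xi, t)) (C := M03) ht.1
      (fun u _ => hasDerivAt_pdy (hpyyd (xi, u)))
      (fun u hu => h03 _ (tri_down hx0 hy0 hp (le_refl _) hxl hu.1 (le_trans hu.2 ht.2)))
    have e' : |pdy (pdy w) (xi, t) - pdy (pdy w) (xi, yj)| ≤ M03 * (t - yj) := e
    have : M03 * (t - yj) ≤ M03 * hy := mul_le_mul_of_nonneg_left (by linarith [ht.2]) hM03
    linarith
  -- L6b
  have L6b : ∀ t ∈ Icc yj y, |pdy w (xi, t) - (pdy w (xi, yj) + pdy (pdy w) (xi, yj) * (t - yj))|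
      ≤ M03 * hy * hy := by
    intro t ht
    have hd : ∀ u ∈ Icc yj t, HasDerivAt (fun u => pdy w (xi, u) - pdy (pdy w) (xi, yj) * u)
        (pdy (pdy w) (xi, u) - pdy (pdy w) (xi, yj)) u := by
      intro u _
      exact (hasDerivAt_pdy (hpyd (xi, u))).sub
        (by simpa using (hasDerivAt_id u).const_mul (pdy (pdy w) (xi, yj)))
    have e := mvt (C := M03 * hy) ht.1 hd
      (fun u hu => L6a u ⟨hu.1, le_trans hu.2 ht.2⟩)
    have e' : |pdy w (xi, t) - pdy (pdy w) (xi, yj) * t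
        - (pdy w (xi, yj) - pdy (pdy w) (xi, yj) * yj)| ≤ M03 * hy * (t - yj) := e
    have d : M03 * hy * (t - yj) ≤ M03 * hy * hy :=
      mul_le_mul_of_nonneg_left (by linarith [ht.2]) (mul_nonneg hM03 hy0.le)
    have eq : pdy w (xi, t) - (pdy w (xi, yj) + pdy (pdy w) (xi, yj) * (t - yj))
        = pdy w (xi, t) - pdy (pdy w) (xi, yj) * t
          - (pdy w (xi, yj) - pdy (pdy w) (xi, yj) * yj) := by ring
    rw [eq]; linarith
  -- L6c
  have L6c : |w (xi, y) - w (xi, yj) - pdy w (xi, yj) * (y - yj)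
      - pdy (pdy w) (xi, yj) * (y - yj) ^ 2 / 2| ≤ M03 * hy * hy * hy := by
    have hd : ∀ t ∈ Icc yj y, HasDerivAt
        (fun t => w (xi, t) - pdy w (xi, yj) * t - pdy (pdy w) (xi, yj) * (t - yj) ^ 2 / 2)
        (pdy w (xi, t) - (pdy w (xi, yj) + pdy (pdy w) (xi, yj) * (t - yj))) t := by
      intro t _
      have h1 : HasDerivAt (fun t => w (xi, t)) (pdy w (xi, t)) t := hasDerivAt_pdy (hwd (xi, t))
      have h2 : HasDerivAt (fun t : ℝ => pdy w (xi, yj) * t) (pdy w (xi, yj)) t := by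
        simpa using (hasDerivAt_id t).const_mul (pdy w (xi, yj))
      have h3 : HasDerivAt (fun t : ℝ => pdy (pdy w) (xi, yj) * (t - yj) ^ 2 / 2)
          (pdy (pdy w) (xi, yj) * (t - yj)) t := by
        have := ((((hasDerivAt_id t).sub_const yj).fun_pow 2).const_mul
          (pdy (pdy w) (xi, yj))).div_const 2
        refine this.congr_deriv ?_
        simp
        ring
      have := (h1.sub h2).sub h3
      refine this.congr_deriv ?_
      ring
    have e := mvt (C := M03 * hy * hy) hyl hd L6b
    have e' : |w (xi, y) - pdy w (xi, yj) * y - pdy (pdy w) (xi, yj) * (y - yj) ^ 2 / 2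
        - (w (xi, yj) - pdy w (xi, yj) * yj - pdy (pdy w) (xi, yj) * (yj - yj) ^ 2 / 2)|
        ≤ M03 * hy * hy * (y - yj) := e
    have d : M03 * hy * hy * (y - yj) ≤ M03 * hy * hy * hy :=
      mul_le_mul_of_nonneg_left (by linarith) (by positivity)
    have eq : w (xi, y) - w (xi, yj) - pdy w (xi, yj) * (y - yj)
        - pdy (pdy w) (xi, yj) * (y - yj) ^ 2 / 2
        = w (xi, y) - pdy w (xi, yj) * y - pdy (pdy w) (xi, yj) * (y - yj) ^ 2 / 2
          - (w (xi, yj) - pdy w (xi, yj) * yj - pdy (pdy w) (xi, yj) * (yj - yj) ^ 2 / 2) := by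
      ring
    rw [eq]; linarith
  -- combine
  have eq : w (x, y) - (w (xi, yj) + pdx w (xi, yj) * (x - xi) + pdy w (xi, yj) * (y - yj)
      + pdx (pdx w) (xi, yj) * (x - xi) ^ 2 / 2
      + pdy (pdx w) (xi, yj) * ((x - xi) * (y - yj))
      + pdy (pdy w) (xi, yj) * (y - yj) ^ 2 / 2)
      = (w (x, y) - w (xi, y) - (pdx w (xi, yj) + pdy (pdx w) (xi, yj) * (y - yj)) * (x - xi)
          - pdx (pdx w) (xi, yj) * (x - xi) ^ 2 / 2)
        + (w (xi, y) - w (xi, yj) - pdy w (xi, yj) * (y - yj)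
          - pdy (pdy w) (xi, yj) * (y - yj) ^ 2 / 2) := by ring
  rw [eq]
  calc |_ + _| ≤ _ := abs_add_le _ _
    _ ≤ hx ^ 3 * M30 + hx ^ 2 * hy * M21 + hx * hy ^ 2 * M12 + hy ^ 3 * M03 := by
      nlinarith [L5, L6c]

lemma continuous_interp (f : ℝ × ℝ → ℝ) (xi yj hx hy : ℝ) :
    Continuous (interp f xi yj hx hy) := by
  unfold interp
  fun_prop

theorem stmt0 :
    ∃ C > 0, ∀ (w : ℝ × ℝ → ℝ) (xi yj hx hy M30 M21 M12 M03 : ℝ),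
      0 < hx → 0 < hy → ContDiff ℝ 3 w →
      (∀ p ∈ tri xi yj hx hy, |pdx (pdx (pdx w)) p| ≤ M30) →
      (∀ p ∈ tri xi yj hx hy, |pdy (pdx (pdx w)) p| ≤ M21) →
      (∀ p ∈ tri xi yj hx hy, |pdy (pdy (pdx w)) p| ≤ M12) →
      (∀ p ∈ tri xi yj hx hy, |pdy (pdy (pdy w)) p| ≤ M03) →
      ∃ R : ℝ,
        (∫ p in tri xi yj hx hy, (w p - interp w xi yj hx hy p)) =
          pdx (pdx w) (xi, yj) * (-(hx ^ 3 * hy) / 24)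
          + pdy (pdx w) (xi, yj) * (hx ^ 2 * hy ^ 2 / 24)
          + pdy (pdy w) (xi, yj) * (-(hx * hy ^ 3) / 24) + R ∧
        |R| ≤ C * (hx * hy / 2) *
          (hx ^ 3 * M30 + hx ^ 2 * hy * M21 + hx * hy ^ 2 * M12 + hy ^ 3 * M03) := by
  refine ⟨4, by norm_num, ?_⟩
  intro w xi yj hx hy M30 M21 M12 M03 hx0 hy0 hw h30 h21 h12 h03
  have hmeas : MeasurableSet (tri xi yj hx hy) := (tri_isClosed xi yj hx hy).measurableSet
  have hcomp : IsCompact (tri xi yj hx hy) := tri_isCompact hx0 hy0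
  have hwc : Continuous w := hw.continuous
  set S : ℝ := hx ^ 3 * M30 + hx ^ 2 * hy * M21 + hx * hy ^ 2 * M12 + hy ^ 3 * M03 with hS
  set Q : ℝ × ℝ → ℝ := fun p =>
    w (xi, yj) + pdx w (xi, yj) * (p.1 - xi) + pdy w (xi, yj) * (p.2 - yj)
      + pdx (pdx w) (xi, yj) * (p.1 - xi) ^ 2 / 2
      + pdy (pdx w) (xi, yj) * ((p.1 - xi) * (p.2 - yj))
      + pdy (pdy w) (xi, yj) * (p.2 - yj) ^ 2 / 2 with hQ
  have hQc : Continuous Q := by rw [hQ]; fun_prop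
  have htb := taylor_bound hx0 hy0 hw h30 h21 h12 h03
  -- the remainder function
  set r : ℝ × ℝ → ℝ := fun p => w p - Q p with hr
  have hrc : Continuous r := hwc.sub hQc
  have hrS : ∀ p ∈ tri xi yj hx hy, |r p| ≤ S := fun p hp => htb p hp
  -- bound on interp r
  have hintrS : ∀ p ∈ tri xi yj hx hy, |interp r xi yj hx hy p| ≤ S := by
    intro p hp
    obtain ⟨h1, h2, h3⟩ := hp
    have hv1 : (xi, yj) ∈ tri xi yj hx hy := mem_tri_vertex hx0 hy0
    have hv2 : (xi + hx, yj) ∈ tri xi yj hx hy := by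
      simp only [tri, mem_setOf_eq]
      refine ⟨by linarith, le_refl _, ?_⟩
      rw [show xi + hx - xi = hx by ring, sub_self, zero_div, div_self hx0.ne', add_zero]
    have hv3 : (xi, yj + hy) ∈ tri xi yj hx hy := by
      simp only [tri, mem_setOf_eq]
      refine ⟨le_refl _, by linarith, ?_⟩
      rw [sub_self, zero_div, show yj + hy - yj = hy by ring, div_self hy0.ne', zero_add]
    have b1 := hrS _ hv1
    have b2 := hrS _ hv2
    have b3 := hrS _ hv3
    have hl2 : 0 ≤ (p.1 - xi) / hx := div_nonneg (by linarith) hx0.le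
    have hl3 : 0 ≤ (p.2 - yj) / hy := div_nonneg (by linarith) hy0.le
    have hl1 : 0 ≤ 1 - (p.1 - xi) / hx - (p.2 - yj) / hy := by linarith
    have hS0 : 0 ≤ S := le_trans (abs_nonneg _) b1
    unfold interp
    have t1 : |r (xi, yj) * (1 - (p.1 - xi) / hx - (p.2 - yj) / hy)|
        ≤ S * (1 - (p.1 - xi) / hx - (p.2 - yj) / hy) := by
      rw [abs_mul, abs_of_nonneg hl1]
      exact mul_le_mul_of_nonneg_right b1 hl1
    have t2 : |r (xi + hx, yj) * ((p.1 - xi) / hx)| ≤ S * ((p.1 - xi) / hx) := by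
      rw [abs_mul, abs_of_nonneg hl2]
      exact mul_le_mul_of_nonneg_right b2 hl2
    have t3 : |r (xi, yj + hy) * ((p.2 - yj) / hy)| ≤ S * ((p.2 - yj) / hy) := by
      rw [abs_mul, abs_of_nonneg hl3]
      exact mul_le_mul_of_nonneg_right b3 hl3
    calc |r (xi, yj) * (1 - (p.1 - xi) / hx - (p.2 - yj) / hy)
          + r (xi + hx, yj) * ((p.1 - xi) / hx) + r (xi, yj + hy) * ((p.2 - yj) / hy)|
        ≤ |r (xi, yj) * (1 - (p.1 - xi) / hx - (p.2 - yj) / hy)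
            + r (xi + hx, yj) * ((p.1 - xi) / hx)| + |r (xi, yj + hy) * ((p.2 - yj) / hy)| :=
          abs_add_le _ _
      _ ≤ |r (xi, yj) * (1 - (p.1 - xi) / hx - (p.2 - yj) / hy)|
            + |r (xi + hx, yj) * ((p.1 - xi) / hx)| + |r (xi, yj + hy) * ((p.2 - yj) / hy)| := by
          linarith [abs_add_le (r (xi, yj) * (1 - (p.1 - xi) / hx - (p.2 - yj) / hy))
            (r (xi + hx, yj) * ((p.1 - xi) / hx))]
      _ ≤ S := by linarith
  -- volume bound
  have hvol : (volume (tri xi yj hx hy)) ≤ ENNReal.ofReal (hx * hy) := by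
    calc volume (tri xi yj hx hy) ≤ volume (Icc (xi, yj) (xi + hx, yj + hy)) :=
          measure_mono (tri_subset_Icc hx0 hy0)
      _ = ENNReal.ofReal (hx * hy) := by
          rw [show Icc ((xi : ℝ), (yj : ℝ)) (xi + hx, yj + hy)
              = Icc xi (xi + hx) ×ˢ Icc yj (yj + hy) from (Icc_prod_eq _ _),
            MeasureTheory.Measure.volume_eq_prod, MeasureTheory.Measure.prod_prod,
            Real.volume_Icc, Real.volume_Icc, ← ENNReal.ofReal_mul (by linarith)]
          norm_num
  have hfin : volume (tri xi yj hx hy) < ⊤ :=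
    lt_of_le_of_lt hvol ENNReal.ofReal_lt_top
  -- the remainder
  refine ⟨∫ p in tri xi yj hx hy, (r p - interp r xi yj hx hy p), ?_, ?_⟩
  · -- main identity
    have hsplit : ∀ p, w p - interp w xi yj hx hy p
        = (Q p - interp Q xi yj hx hy p) + (r p - interp r xi yj hx hy p) := by
      intro p
      simp only [interp, hr, hQ]
      ring
    have hint1 : IntegrableOn (fun p => Q p - interp Q xi yj hx hy p) (tri xi yj hx hy) :=
      ((hQc.sub (continuous_interp Q xi yj hx hy)).continuousOn).integrableOn_compact hcomp
    have hint2 : IntegrableOn (fun p => r p - interp r xi yj hx hy p) (tri xi yj hx hy) :=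
      ((hrc.sub (continuous_interp r xi yj hx hy)).continuousOn).integrableOn_compact hcomp
    have : (∫ p in tri xi yj hx hy, (w p - interp w xi yj hx hy p))
        = (∫ p in tri xi yj hx hy, (Q p - interp Q xi yj hx hy p))
          + ∫ p in tri xi yj hx hy, (r p - interp r xi yj hx hy p) := by
      rw [← MeasureTheory.integral_add hint1 hint2]
      exact MeasureTheory.setIntegral_congr_fun hmeas fun p _ => hsplit p
    rw [this]
    congr 1
    have hQint : ∀ p : ℝ × ℝ, Q p - interp Q xi yj hx hy p
        = pdx (pdx w) (xi, yj) * ((p.1 - xi) ^ 2 - hx * (p.1 - xi)) / 2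
          + pdy (pdx w) (xi, yj) * (p.1 - xi) * (p.2 - yj)
          + pdy (pdy w) (xi, yj) * ((p.2 - yj) ^ 2 - hy * (p.2 - yj)) / 2 := by
      intro p
      simp only [interp, hQ]
      field_simp
      ring
    rw [MeasureTheory.setIntegral_congr_fun hmeas fun p _ => hQint p]
    exact main_integral _ _ _ hx0 hy0
  · -- remainder bound
    have hb : ∀ p ∈ tri xi yj hx hy, ‖r p - interp r xi yj hx hy p‖ ≤ 2 * S := by
      intro p hp
      rw [Real.norm_eq_abs]
      calc |r p - interp r xi yj hx hy p| ≤ |r p| + |interp r xi yj hx hy p| := abs_sub _ _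
        _ ≤ 2 * S := by linarith [hrS p hp, hintrS p hp]
    have := MeasureTheory.norm_setIntegral_le_of_norm_le_const hfin hb
    rw [Real.norm_eq_abs] at this
    have hS0 : 0 ≤ S := le_trans (abs_nonneg _) (hrS _ (mem_tri_vertex hx0 hy0))
    have hvr : (volume (tri xi yj hx hy)).toReal ≤ hx * hy := by
      refine ENNReal.toReal_le_of_le_ofReal (by positivity) hvol
    calc |∫ p in tri xi yj hx hy, (r p - interp r xi yj hx hy p)|
        ≤ 2 * S * (volume (tri xi yj hx hy)).toReal := this
      _ ≤ 2 * S * (hx * hy) := by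
          apply mul_le_mul_of_nonneg_left hvr (by linarith)
      _ = 4 * (hx * hy / 2) * S := by ring
end

section
/- Let w ∈ C²([x_i, x_{i+1}] × [y_j, y_{j+1}]) and let w^I be the affine interpolant of w at the three vertices (x_i,y_j), (x_{i+1},y_j), (x_i,y_{j+1}) of the triangle K (with legs h_x, h_y). Then ‖w − w^I‖_{L∞(K)} ≤ C (h_x² ‖w_{xx}‖_{L∞(K)} + h_x h_y ‖w_{xy}‖_{L∞(K)} + h_y² ‖w_{yy}‖_{L∞(K)}) for an absolute constant C. -/
open Set

section Aux

variable {E : Type*} [NormedAddCommGroup E] [NormedSpace ℝ E]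

lemma sliceX {f : ℝ × ℝ → E} (hf : Differentiable ℝ f) (x c : ℝ) :
    HasDerivAt (fun t => f (t, c)) (fderiv ℝ f (x, c) (1, 0)) x :=
  (hf (x, c)).hasFDerivAt.comp_hasDerivAt x (HasDerivAt.prodMk (hasDerivAt_id x) (hasDerivAt_const x c))

lemma sliceY {f : ℝ × ℝ → E} (hf : Differentiable ℝ f) (c y : ℝ) :
    HasDerivAt (fun t => f (c, t)) (fderiv ℝ f (c, y) (0, 1)) y :=
  (hf (c, y)).hasFDerivAt.comp_hasDerivAt y (HasDerivAt.prodMk (hasDerivAt_const y c) (hasDerivAt_id y))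

lemma sliceD {f : ℝ × ℝ → E} (hf : Differentiable ℝ f) (a d : ℝ × ℝ) (t : ℝ) :
    HasDerivAt (fun s => f (a + s • d)) (fderiv ℝ f (a + t • d) d) t := by
  have h : HasDerivAt (fun s : ℝ => a + s • d) d t := by
    simpa using ((hasDerivAt_id t).smul_const d).const_add a
  exact (hf _).hasFDerivAt.comp_hasDerivAt t h

lemma pdx_eq {f : ℝ × ℝ → ℝ} (hf : Differentiable ℝ f) (q : ℝ × ℝ) :
    pdx f q = fderiv ℝ f q (1, 0) := by
  have h := (sliceX hf q.1 q.2).deriv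
  simpa [pdx] using h

lemma pdy_eq {f : ℝ × ℝ → ℝ} (hf : Differentiable ℝ f) (q : ℝ × ℝ) :
    pdy f q = fderiv ℝ f q (0, 1) := by
  have h := (sliceY hf q.1 q.2).deriv
  simpa [pdy] using h

variable {w : ℝ × ℝ → ℝ}

lemma hF_diff (hw : ContDiff ℝ 2 w) : Differentiable ℝ (fderiv ℝ w) :=
  (hw.fderiv_right (m := 1) (by norm_num)).differentiable one_ne_zero

lemma pdx_pdx_eq (hw : ContDiff ℝ 2 w) (q : ℝ × ℝ) :
    pdx (pdx w) q = fderiv ℝ (fderiv ℝ w) q (1, 0) (1, 0) := by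
  have hdw : Differentiable ℝ w := hw.differentiable (by norm_num)
  have hF := hF_diff hw
  have h1 : (fun t => pdx w (t, q.2)) = fun t => (fderiv ℝ w (t, q.2)) (1, 0) :=
    funext fun t => pdx_eq hdw (t, q.2)
  have h2 : HasDerivAt (fun t => (fderiv ℝ w (t, q.2)) ((1:ℝ), (0:ℝ)))
      (fderiv ℝ (fderiv ℝ w) (q.1, q.2) (1, 0) (1, 0)) q.1 := by
    simpa [Function.comp_def] using
      (ContinuousLinearMap.apply ℝ ℝ ((1:ℝ), (0:ℝ))).hasFDerivAt.comp_hasDerivAt q.1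
        (sliceX hF q.1 q.2)
  show deriv (fun t => pdx w (t, q.2)) q.1 = _
  rw [h1]
  simpa using h2.deriv

lemma pdy_pdx_eq (hw : ContDiff ℝ 2 w) (q : ℝ × ℝ) :
    pdy (pdx w) q = fderiv ℝ (fderiv ℝ w) q (0, 1) (1, 0) := by
  have hdw : Differentiable ℝ w := hw.differentiable (by norm_num)
  have hF := hF_diff hw
  have h1 : (fun t => pdx w (q.1, t)) = fun t => (fderiv ℝ w (q.1, t)) (1, 0) :=
    funext fun t => pdx_eq hdw (q.1, t)
  have h2 : HasDerivAt (fun t => (fderiv ℝ w (q.1, t)) ((1:ℝ), (0:ℝ)))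
      (fderiv ℝ (fderiv ℝ w) (q.1, q.2) (0, 1) (1, 0)) q.2 := by
    simpa [Function.comp_def] using
      (ContinuousLinearMap.apply ℝ ℝ ((1:ℝ), (0:ℝ))).hasFDerivAt.comp_hasDerivAt q.2
        (sliceY hF q.1 q.2)
  show deriv (fun t => pdx w (q.1, t)) q.2 = _
  rw [h1]
  simpa using h2.deriv

lemma pdy_pdy_eq (hw : ContDiff ℝ 2 w) (q : ℝ × ℝ) :
    pdy (pdy w) q = fderiv ℝ (fderiv ℝ w) q (0, 1) (0, 1) := by
  have hdw : Differentiable ℝ w := hw.differentiable (by norm_num)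
  have hF := hF_diff hw
  have h1 : (fun t => pdy w (q.1, t)) = fun t => (fderiv ℝ w (q.1, t)) (0, 1) :=
    funext fun t => pdy_eq hdw (q.1, t)
  have h2 : HasDerivAt (fun t => (fderiv ℝ w (q.1, t)) ((0:ℝ), (1:ℝ)))
      (fderiv ℝ (fderiv ℝ w) (q.1, q.2) (0, 1) (0, 1)) q.2 := by
    simpa [Function.comp_def] using
      (ContinuousLinearMap.apply ℝ ℝ ((0:ℝ), (1:ℝ))).hasFDerivAt.comp_hasDerivAt q.2
        (sliceY hF q.1 q.2)
  show deriv (fun t => pdy w (q.1, t)) q.2 = _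
  rw [h1]
  simpa using h2.deriv

lemma symm2 (hw : ContDiff ℝ 2 w) (q : ℝ × ℝ) (u v : ℝ × ℝ) :
    fderiv ℝ (fderiv ℝ w) q u v = fderiv ℝ (fderiv ℝ w) q v u :=
  second_derivative_symmetric (fun y => ((hw.differentiable (by norm_num)) y).hasFDerivAt)
    ((hF_diff hw q).hasFDerivAt) u v

lemma taylor1 {g g' g'' : ℝ → ℝ} {B : ℝ}
    (hg : ∀ t, HasDerivAt g (g' t) t) (hg' : ∀ t, HasDerivAt g' (g'' t) t)
    (hB : ∀ t ∈ Icc (0:ℝ) 1, |g'' t| ≤ B) :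
    |g 1 - g 0 - g' 0| ≤ B := by
  have step1 : ∀ t ∈ Icc (0:ℝ) 1, |g' t - g' 0| ≤ B := by
    intro t ht
    have h := norm_image_sub_le_of_norm_deriv_le_segment'
      (f := g') (f' := g'') (a := 0) (b := 1)
      (fun s hs => (hg' s).hasDerivWithinAt)
      (fun s hs => by simpa [Real.norm_eq_abs] using hB s (Ico_subset_Icc_self hs)) t ht
    rw [Real.norm_eq_abs] at h
    have hBt : B * (t - 0) ≤ B := by
      have hB0 : 0 ≤ B := le_trans (abs_nonneg _) (hB 0 (by norm_num))
      nlinarith [ht.1, ht.2]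
    linarith
  have step2 := norm_image_sub_le_of_norm_deriv_le_segment'
      (f := fun t => g t - t * g' 0) (f' := fun t => g' t - g' 0) (a := 0) (b := 1)
      (fun s hs => by
        simpa [Pi.sub_def] using ((hg s).sub ((hasDerivAt_id s).mul_const (g' 0))).hasDerivWithinAt)
      (fun s hs => by simpa [Real.norm_eq_abs] using step1 s (Ico_subset_Icc_self hs))
      1 (by norm_num)
  rw [Real.norm_eq_abs] at step2
  have he : g 1 - 1 * g' 0 - (g 0 - 0 * g' 0) = g 1 - g 0 - g' 0 := by ring
  rw [he] at step2
  linarith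

lemma taylor_rem (hw : ContDiff ℝ 2 w)
    (hF : Differentiable ℝ (fderiv ℝ w)) {S : Set (ℝ × ℝ)} {B : ℝ}
    (p v : ℝ × ℝ) (hseg : ∀ t ∈ Icc (0:ℝ) 1, p + t • (v - p) ∈ S)
    (hbound : ∀ q ∈ S, |fderiv ℝ (fderiv ℝ w) q (v - p) (v - p)| ≤ B) :
    |w v - w p - fderiv ℝ w p (v - p)| ≤ B := by
  have hdw : Differentiable ℝ w := hw.differentiable (by norm_num)
  set d := v - p with hd
  have hg : ∀ t, HasDerivAt (fun s => w (p + s • d))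
      ((fun t => fderiv ℝ w (p + t • d) d) t) t := fun t => sliceD hdw p d t
  have hg' : ∀ t, HasDerivAt (fun t => fderiv ℝ w (p + t • d) d)
      ((fun t => fderiv ℝ (fderiv ℝ w) (p + t • d) d d) t) t := fun t => by
    simpa [Function.comp_def] using (ContinuousLinearMap.apply ℝ ℝ d).hasFDerivAt.comp_hasDerivAt t (sliceD hF p d t)
  have h := taylor1 hg hg' (fun t ht => hbound _ (hseg t ht))
  simpa [hd] using h

lemma bilin_expand (L : (ℝ × ℝ) →L[ℝ] ((ℝ × ℝ) →L[ℝ] ℝ)) (d : ℝ × ℝ) :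
    L d d = d.1 * d.1 * L (1,0) (1,0) + d.1 * d.2 * L (1,0) (0,1)
      + d.2 * d.1 * L (0,1) (1,0) + d.2 * d.2 * L (0,1) (0,1) := by
  have gen : ∀ (a b : ℝ) (u v : ℝ × ℝ), L (a • u + b • v) (a • u + b • v)
      = a * a * L u u + a * b * L u v + b * a * L v u + b * b * L v v := by
    intro a b u v
    simp [map_add, map_smul, ContinuousLinearMap.add_apply, ContinuousLinearMap.smul_apply,
      smul_eq_mul]
    ring
  have hd : d = d.1 • ((1:ℝ), (0:ℝ)) + d.2 • ((0:ℝ), (1:ℝ)) := by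
    simp [Prod.ext_iff]
  have key := gen d.1 d.2 ((1:ℝ), (0:ℝ)) ((0:ℝ), (1:ℝ))
  rw [← hd] at key
  exact key

lemma tri_convex {xi yj hx hy : ℝ} (hhx : 0 < hx) (hhy : 0 < hy) :
    Convex ℝ (tri xi yj hx hy) := by
  intro p hp q hq a b ha hb hab
  obtain ⟨hp1, hp2, hp3⟩ := hp
  obtain ⟨hq1, hq2, hq3⟩ := hq
  have hp3' : (p.1 - xi) * hy + hx * (p.2 - yj) ≤ hx * hy := by
    rw [div_add_div _ _ (ne_of_gt hhx) (ne_of_gt hhy), div_le_one (by positivity)] at hp3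
    linarith
  have hq3' : (q.1 - xi) * hy + hx * (q.2 - yj) ≤ hx * hy := by
    rw [div_add_div _ _ (ne_of_gt hhx) (ne_of_gt hhy), div_le_one (by positivity)] at hq3
    linarith
  have e1 : (a • p + b • q).1 = a * p.1 + b * q.1 := by simp
  have e2 : (a • p + b • q).2 = a * p.2 + b * q.2 := by simp
  refine ⟨?_, ?_, ?_⟩
  · rw [e1]
    have hxi : a * xi + b * xi = xi := by linear_combination xi * hab
    linarith [mul_le_mul_of_nonneg_left hp1 ha, mul_le_mul_of_nonneg_left hq1 hb]
  · rw [e2]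
    have hyj : a * yj + b * yj = yj := by linear_combination yj * hab
    linarith [mul_le_mul_of_nonneg_left hp2 ha, mul_le_mul_of_nonneg_left hq2 hb]
  · show ((a • p + b • q).1 - xi) / hx + ((a • p + b • q).2 - yj) / hy ≤ 1
    rw [e1, e2, div_add_div _ _ (ne_of_gt hhx) (ne_of_gt hhy), div_le_one (by positivity)]
    have key : (a * p.1 + b * q.1 - xi) * hy + hx * (a * p.2 + b * q.2 - yj)
        = a * ((p.1 - xi) * hy + hx * (p.2 - yj)) + b * ((q.1 - xi) * hy + hx * (q.2 - yj)) := by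
      linear_combination (xi * hy + hx * yj) * hab
    rw [key]
    have ha' := mul_le_mul_of_nonneg_left hp3' ha
    have hb' := mul_le_mul_of_nonneg_left hq3' hb
    have hsum : a * (hx * hy) + b * (hx * hy) = hx * hy := by linear_combination (hx * hy) * hab
    linarith

end Aux

set_option maxHeartbeats 1600000 in
/-- Anisotropic `L∞` interpolation error estimate on axis-aligned right triangles:
`‖w - w^I‖_{L∞(K)} ≤ C (hx²‖w_xx‖ + hx hy ‖w_xy‖ + hy²‖w_yy‖)` with absolute `C`. -/
theorem stmt15 :
    ∃ C > (0:ℝ), ∀ (w : ℝ × ℝ → ℝ) (xi yj hx hy M20 M11 M02 : ℝ),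
      0 < hx → 0 < hy → ContDiff ℝ 2 w →
      (∀ p ∈ tri xi yj hx hy, |pdx (pdx w) p| ≤ M20) →
      (∀ p ∈ tri xi yj hx hy, |pdy (pdx w) p| ≤ M11) →
      (∀ p ∈ tri xi yj hx hy, |pdy (pdy w) p| ≤ M02) →
      ∀ p ∈ tri xi yj hx hy,
        |w p - interp w xi yj hx hy p|
          ≤ C * (hx ^ 2 * M20 + hx * hy * M11 + hy ^ 2 * M02) := by
  refine ⟨2, by norm_num, ?_⟩
  intro w xi yj hx hy M20 M11 M02 hhx hhy hw h20 h11 h02 p hp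
  have hF : Differentiable ℝ (fderiv ℝ w) := hF_diff hw
  obtain ⟨hp1, hp2, hp3⟩ := hp
  have hptri : p ∈ tri xi yj hx hy := ⟨hp1, hp2, hp3⟩
  have hM20 : 0 ≤ M20 := le_trans (abs_nonneg _) (h20 p hptri)
  have hM11 : 0 ≤ M11 := le_trans (abs_nonneg _) (h11 p hptri)
  have hM02 : 0 ≤ M02 := le_trans (abs_nonneg _) (h02 p hptri)
  set B := hx ^ 2 * M20 + 2 * (hx * hy) * M11 + hy ^ 2 * M02 with hBdef
  -- bound on the second-derivative bilinear form
  have hAb : ∀ q ∈ tri xi yj hx hy, ∀ d : ℝ × ℝ, |d.1| ≤ hx → |d.2| ≤ hy →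
      |fderiv ℝ (fderiv ℝ w) q d d| ≤ B := by
    intro q hq d hd1 hd2
    have hsym : fderiv ℝ (fderiv ℝ w) q (1,0) (0,1) = fderiv ℝ (fderiv ℝ w) q (0,1) (1,0) :=
      symm2 hw q _ _
    have e' : fderiv ℝ (fderiv ℝ w) q d d
        = d.1 ^ 2 * fderiv ℝ (fderiv ℝ w) q (1,0) (1,0)
          + 2 * d.1 * d.2 * fderiv ℝ (fderiv ℝ w) q (0,1) (1,0)
          + d.2 ^ 2 * fderiv ℝ (fderiv ℝ w) q (0,1) (0,1) := by
      rw [bilin_expand (fderiv ℝ (fderiv ℝ w) q) d, hsym]; ring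
    have b11 : |fderiv ℝ (fderiv ℝ w) q (1,0) (1,0)| ≤ M20 := by
      rw [← pdx_pdx_eq hw q]; exact h20 q hq
    have b21 : |fderiv ℝ (fderiv ℝ w) q (0,1) (1,0)| ≤ M11 := by
      rw [← pdy_pdx_eq hw q]; exact h11 q hq
    have b22 : |fderiv ℝ (fderiv ℝ w) q (0,1) (0,1)| ≤ M02 := by
      rw [← pdy_pdy_eq hw q]; exact h02 q hq
    rw [e']
    have k1 : |d.1 ^ 2 * fderiv ℝ (fderiv ℝ w) q (1,0) (1,0)| ≤ hx ^ 2 * M20 := by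
      rw [abs_mul, abs_pow]
      exact mul_le_mul (pow_le_pow_left₀ (abs_nonneg _) hd1 2) b11 (abs_nonneg _) (by positivity)
    have k2 : |2 * d.1 * d.2 * fderiv ℝ (fderiv ℝ w) q (0,1) (1,0)| ≤ 2 * (hx * hy) * M11 := by
      rw [abs_mul]
      have h2d : |2 * d.1 * d.2| ≤ 2 * (hx * hy) := by
        rw [abs_mul, abs_mul, abs_two]
        nlinarith [abs_nonneg d.1, abs_nonneg d.2]
      exact mul_le_mul h2d b21 (abs_nonneg _) (by positivity)
    have k3 : |d.2 ^ 2 * fderiv ℝ (fderiv ℝ w) q (0,1) (0,1)| ≤ hy ^ 2 * M02 := by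
      rw [abs_mul, abs_pow]
      exact mul_le_mul (pow_le_pow_left₀ (abs_nonneg _) hd2 2) b22 (abs_nonneg _) (by positivity)
    calc |d.1 ^ 2 * fderiv ℝ (fderiv ℝ w) q (1,0) (1,0)
          + 2 * d.1 * d.2 * fderiv ℝ (fderiv ℝ w) q (0,1) (1,0)
          + d.2 ^ 2 * fderiv ℝ (fderiv ℝ w) q (0,1) (0,1)|
        ≤ |d.1 ^ 2 * fderiv ℝ (fderiv ℝ w) q (1,0) (1,0)|
          + |2 * d.1 * d.2 * fderiv ℝ (fderiv ℝ w) q (0,1) (1,0)|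
          + |d.2 ^ 2 * fderiv ℝ (fderiv ℝ w) q (0,1) (0,1)| := abs_add_three _ _ _
      _ ≤ B := by rw [hBdef]; linarith
  -- vertices of the triangle
  have hv0 : ((xi, yj) : ℝ × ℝ) ∈ tri xi yj hx hy := by
    refine ⟨le_refl _, le_refl _, ?_⟩
    simp
  have hv1 : ((xi + hx, yj) : ℝ × ℝ) ∈ tri xi yj hx hy := by
    refine ⟨by simp [hhx.le], le_refl _, ?_⟩
    have : ((xi + hx : ℝ) - xi) / hx + ((yj : ℝ) - yj) / hy = 1 := by field_simp; ring
    exact le_of_eq this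
  have hv2 : ((xi, yj + hy) : ℝ × ℝ) ∈ tri xi yj hx hy := by
    refine ⟨le_refl _, by simp [hhy.le], ?_⟩
    have : ((xi : ℝ) - xi) / hx + ((yj + hy : ℝ) - yj) / hy = 1 := by field_simp; ring
    exact le_of_eq this
  -- segments from p to vertices stay in the triangle
  have hseg : ∀ v ∈ tri xi yj hx hy, ∀ t ∈ Icc (0:ℝ) 1, p + t • (v - p) ∈ tri xi yj hx hy := by
    intro v hv t ht
    have h := tri_convex hhx hhy hptri hv (by linarith [ht.2] : (0:ℝ) ≤ 1 - t) ht.1 (by ring)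
    have he : p + t • (v - p) = (1 - t) • p + t • v := by module
    rw [he]; exact h
  -- range of p
  have hs0 : 0 ≤ (p.1 - xi) / hx := div_nonneg (by linarith) hhx.le
  have ht0 : 0 ≤ (p.2 - yj) / hy := div_nonneg (by linarith) hhy.le
  have hpx : p.1 ≤ xi + hx := by
    have : (p.1 - xi) / hx ≤ 1 := by linarith
    have := (div_le_one hhx).mp this
    linarith
  have hpy : p.2 ≤ yj + hy := by
    have : (p.2 - yj) / hy ≤ 1 := by linarith
    have := (div_le_one hhy).mp this
    linarith
  -- Taylor remainder at each vertex
  have hrem : ∀ v ∈ tri xi yj hx hy, |(v - p).1| ≤ hx → |(v - p).2| ≤ hy →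
      |w v - w p - fderiv ℝ w p (v - p)| ≤ B :=
    fun v hv hd1 hd2 =>
      taylor_rem hw hF p v (hseg v hv) (fun q hq => hAb q hq (v - p) hd1 hd2)
  have hd0x : |(((xi, yj) : ℝ × ℝ) - p).1| ≤ hx := by
    simp only [Prod.fst_sub]
    rw [abs_le]; constructor <;> simp <;> linarith
  have hd0y : |(((xi, yj) : ℝ × ℝ) - p).2| ≤ hy := by
    simp only [Prod.snd_sub]
    rw [abs_le]; constructor <;> simp <;> linarith
  have hd1x : |(((xi + hx, yj) : ℝ × ℝ) - p).1| ≤ hx := by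
    simp only [Prod.fst_sub]
    rw [abs_le]; constructor <;> simp <;> linarith
  have hd2y : |(((xi, yj + hy) : ℝ × ℝ) - p).2| ≤ hy := by
    simp only [Prod.snd_sub]
    rw [abs_le]; constructor <;> simp <;> linarith
  have hR0 := hrem _ hv0 hd0x hd0y
  have hR1 := hrem _ hv1 hd1x hd0y
  have hR2 := hrem _ hv2 hd0x hd2y
  set s := (p.1 - xi) / hx with hs
  set t := (p.2 - yj) / hy with ht
  -- the barycentric vector identity
  have hvec : (1 - s - t) • (((xi, yj) : ℝ × ℝ) - p) + s • (((xi + hx, yj) : ℝ × ℝ) - p)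
      + t • (((xi, yj + hy) : ℝ × ℝ) - p) = 0 := by
    have h1 : s * hx = p.1 - xi := by rw [hs]; field_simp
    have h2 : t * hy = p.2 - yj := by rw [ht]; field_simp
    rw [Prod.ext_iff]
    refine ⟨?_, ?_⟩
    · simp only [Prod.fst_add, Prod.smul_fst, Prod.fst_sub, Prod.fst_zero, smul_eq_mul]
      linear_combination h1
    · simp only [Prod.snd_add, Prod.smul_snd, Prod.snd_sub, Prod.snd_zero, smul_eq_mul]
      linear_combination h2
  have hL : (1 - s - t) * fderiv ℝ w p (((xi, yj) : ℝ × ℝ) - p)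
      + s * fderiv ℝ w p (((xi + hx, yj) : ℝ × ℝ) - p)
      + t * fderiv ℝ w p (((xi, yj + hy) : ℝ × ℝ) - p) = 0 := by
    have hmap : fderiv ℝ w p ((1 - s - t) • (((xi, yj) : ℝ × ℝ) - p)
        + s • (((xi + hx, yj) : ℝ × ℝ) - p) + t • (((xi, yj + hy) : ℝ × ℝ) - p))
        = (1 - s - t) * fderiv ℝ w p (((xi, yj) : ℝ × ℝ) - p)
          + s * fderiv ℝ w p (((xi + hx, yj) : ℝ × ℝ) - p)
          + t * fderiv ℝ w p (((xi, yj + hy) : ℝ × ℝ) - p) := by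
      simp [map_add, map_smul, smul_eq_mul]
    rw [hvec] at hmap
    simpa using hmap.symm
  -- the error identity
  have hiden : w p - interp w xi yj hx hy p
      = -((1 - s - t) * (w (xi, yj) - w p - fderiv ℝ w p (((xi, yj) : ℝ × ℝ) - p))
        + s * (w (xi + hx, yj) - w p - fderiv ℝ w p (((xi + hx, yj) : ℝ × ℝ) - p))
        + t * (w (xi, yj + hy) - w p - fderiv ℝ w p (((xi, yj + hy) : ℝ × ℝ) - p))) := by
    simp only [interp]
    rw [← hs, ← ht]
    linear_combination -hL
  have hst : s + t ≤ 1 := hp3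
  have hBnn : 0 ≤ B := le_trans (abs_nonneg _) hR0
  have c1 : |(1 - s - t) * (w (xi, yj) - w p - fderiv ℝ w p (((xi, yj) : ℝ × ℝ) - p))|
      ≤ (1 - s - t) * B := by
    rw [abs_mul, abs_of_nonneg (by linarith : (0:ℝ) ≤ 1 - s - t)]
    exact mul_le_mul_of_nonneg_left hR0 (by linarith)
  have c2 : |s * (w (xi + hx, yj) - w p - fderiv ℝ w p (((xi + hx, yj) : ℝ × ℝ) - p))|
      ≤ s * B := by
    rw [abs_mul, abs_of_nonneg hs0]
    exact mul_le_mul_of_nonneg_left hR1 hs0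
  have c3 : |t * (w (xi, yj + hy) - w p - fderiv ℝ w p (((xi, yj + hy) : ℝ × ℝ) - p))|
      ≤ t * B := by
    rw [abs_mul, abs_of_nonneg ht0]
    exact mul_le_mul_of_nonneg_left hR2 ht0
  have habs : |w p - interp w xi yj hx hy p| ≤ B := by
    rw [hiden, abs_neg]
    calc |(1 - s - t) * (w (xi, yj) - w p - fderiv ℝ w p (((xi, yj) : ℝ × ℝ) - p))
          + s * (w (xi + hx, yj) - w p - fderiv ℝ w p (((xi + hx, yj) : ℝ × ℝ) - p))
          + t * (w (xi, yj + hy) - w p - fderiv ℝ w p (((xi, yj + hy) : ℝ × ℝ) - p))|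
        ≤ |(1 - s - t) * (w (xi, yj) - w p - fderiv ℝ w p (((xi, yj) : ℝ × ℝ) - p))|
          + |s * (w (xi + hx, yj) - w p - fderiv ℝ w p (((xi + hx, yj) : ℝ × ℝ) - p))|
          + |t * (w (xi, yj + hy) - w p - fderiv ℝ w p (((xi, yj + hy) : ℝ × ℝ) - p))| :=
        abs_add_three _ _ _
      _ ≤ (1 - s - t) * B + s * B + t * B := by linarith
      _ = B := by ring
  calc |w p - interp w xi yj hx hy p| ≤ B := habs
    _ ≤ 2 * (hx ^ 2 * M20 + hx * hy * M11 + hy ^ 2 * M02) := by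
      rw [hBdef]
      nlinarith [mul_nonneg (sq_nonneg hx) hM20, mul_nonneg (sq_nonneg hy) hM02,
        mul_nonneg (mul_nonneg hhx.le hhy.le) hM11]
end

section
/- Let w ∈ C² on the right triangle K with vertices (x_i,y_j), (x_{i+1},y_j), (x_i,y_{j+1}) (legs h_x, h_y) and let w^I be its affine interpolant at the vertices. Then ‖∂_x(w − w^I)‖_{L∞(K)} ≤ C (h_x ‖w_{xx}‖_{L∞(K)} + h_y ‖w_{xy}‖_{L∞(K)}) for an absolute constant C. -/
open Set

lemma keyx {f : ℝ × ℝ → ℝ} (hf : Differentiable ℝ f) (x y : ℝ) :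
    HasDerivAt (fun t => f (t, y)) (fderiv ℝ f (x, y) (1, 0)) x := by
  have h1 : HasDerivAt (fun t : ℝ => (t, y)) ((1:ℝ), (0:ℝ)) x :=
    (hasDerivAt_id x).prodMk (hasDerivAt_const x y)
  exact (hf (x, y)).hasFDerivAt.comp_hasDerivAt x h1

lemma keyy {f : ℝ × ℝ → ℝ} (hf : Differentiable ℝ f) (x y : ℝ) :
    HasDerivAt (fun t => f (x, t)) (fderiv ℝ f (x, y) (0, 1)) y := by
  have h1 : HasDerivAt (fun t : ℝ => (x, t)) ((0:ℝ), (1:ℝ)) y :=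
    (hasDerivAt_const y x).prodMk (hasDerivAt_id y)
  exact (hf (x, y)).hasFDerivAt.comp_hasDerivAt y h1

/-- Anisotropic first-derivative interpolation error estimate on axis-aligned right
triangles: `‖∂_x(w - w^I)‖_{L∞(K)} ≤ C (hx ‖w_xx‖ + hy ‖w_xy‖)` with absolute `C`. -/
theorem stmt16 :
    ∃ C > (0:ℝ), ∀ (w : ℝ × ℝ → ℝ) (xi yj hx hy M20 M11 : ℝ),
      0 < hx → 0 < hy → ContDiff ℝ 2 w →
      (∀ p ∈ tri xi yj hx hy, |pdx (pdx w) p| ≤ M20) →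
      (∀ p ∈ tri xi yj hx hy, |pdy (pdx w) p| ≤ M11) →
      ∀ p ∈ tri xi yj hx hy,
        |pdx (fun q => w q - interp w xi yj hx hy q) p|
          ≤ C * (hx * M20 + hy * M11) := by
  refine ⟨1, one_pos, ?_⟩
  intro w xi yj hx hy M20 M11 hhx hhy hw hxx hxy p hp
  have hwd : Differentiable ℝ w := hw.differentiable two_ne_zero
  set g : ℝ × ℝ → ℝ := fun q => fderiv ℝ w q (1, 0) with hgdef
  have hgc : ContDiff ℝ 1 g := by
    have h1 : ContDiff ℝ 1 (fderiv ℝ w) := hw.fderiv_right (le_refl 2)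
    exact (ContinuousLinearMap.apply ℝ ℝ ((1:ℝ), (0:ℝ))).contDiff.comp h1
  have hgd : Differentiable ℝ g := hgc.differentiable one_ne_zero
  have hpdxw : pdx w = g := by
    funext q
    have := (keyx hwd q.1 q.2).deriv
    simpa [pdx, hgdef] using this
  obtain ⟨hp1, hp2, hp3⟩ := hp
  have m20 : 0 ≤ M20 := by
    refine le_trans (abs_nonneg _) (hxx (xi, yj) ?_)
    exact ⟨le_rfl, le_rfl, by simp⟩
  have m11 : 0 ≤ M11 := by
    refine le_trans (abs_nonneg _) (hxy (xi, yj) ?_)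
    exact ⟨le_rfl, le_rfl, by simp⟩
  have hx1 : p.1 - xi ≤ hx := by
    have h2 : 0 ≤ (p.2 - yj) / hy := div_nonneg (by linarith) hhy.le
    have : (p.1 - xi) / hx ≤ 1 := by linarith
    exact (div_le_one hhx).mp this
  have hy1 : p.2 - yj ≤ hy := by
    have h2 : 0 ≤ (p.1 - xi) / hx := div_nonneg (by linarith) hhx.le
    have : (p.2 - yj) / hy ≤ 1 := by linarith
    exact (div_le_one hhy).mp this
  -- MVT for the slope
  have hlt : xi < xi + hx := by linarith
  obtain ⟨ξ, hξ, hslope⟩ := exists_hasDerivAt_eq_slope (fun t => w (t, yj))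
    (fun t => g (t, yj)) hlt
    ((hwd.continuous.comp (continuous_id.prodMk continuous_const)).continuousOn)
    (fun x _ => keyx hwd x yj)
  rw [add_sub_cancel_left] at hslope
  -- derivative of interpolant in x
  have hid : HasDerivAt (fun t : ℝ => (t - xi) / hx) (1 / hx) p.1 :=
    ((hasDerivAt_id p.1).sub_const xi).div_const hx
  have hint : HasDerivAt (fun t => interp w xi yj hx hy (t, p.2))
      ((w (xi + hx, yj) - w (xi, yj)) / hx) p.1 := by
    have h1 : HasDerivAt (fun t : ℝ =>
        w (xi, yj) * (1 - (t - xi) / hx - (p.2 - yj) / hy)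
          + w (xi + hx, yj) * ((t - xi) / hx) + w (xi, yj + hy) * ((p.2 - yj) / hy))
        (w (xi, yj) * (0 - 1 / hx) + w (xi + hx, yj) * (1 / hx)) p.1 := by
      exact ((((((hasDerivAt_const p.1 (1:ℝ)).sub hid).sub_const ((p.2 - yj) / hy)).const_mul
        (w (xi, yj))).add (hid.const_mul (w (xi + hx, yj)))).add_const _)
    have h2 : w (xi, yj) * (0 - 1 / hx) + w (xi + hx, yj) * (1 / hx)
        = (w (xi + hx, yj) - w (xi, yj)) / hx := by ring
    rw [h2] at h1
    exact h1
  have hsub : HasDerivAt (fun t => w (t, p.2) - interp w xi yj hx hy (t, p.2))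
      (g p - (w (xi + hx, yj) - w (xi, yj)) / hx) p.1 := by
    have := (keyx hwd p.1 p.2).sub hint
    exact this
  have hval : pdx (fun q => w q - interp w xi yj hx hy q) p
      = g p - g (ξ, yj) := by
    rw [hslope]
    exact hsub.deriv
  rw [hval]
  -- vertical bound
  have memv : ∀ t ∈ Icc yj p.2, (p.1, t) ∈ tri xi yj hx hy := by
    intro t ht
    refine ⟨hp1, ht.1, ?_⟩
    have : (t - yj) / hy ≤ (p.2 - yj) / hy := by gcongr; exact ht.2
    linarith
  have bv : ‖g (p.1, p.2) - g (p.1, yj)‖ ≤ M11 * ‖p.2 - yj‖ := by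
    refine Convex.norm_image_sub_le_of_norm_hasDerivWithin_le
      (f := fun t => g (p.1, t)) (f' := fun t => fderiv ℝ g (p.1, t) (0, 1))
      (s := Icc yj p.2) (fun t ht => (keyy hgd p.1 t).hasDerivWithinAt) ?_
      (convex_Icc _ _) ⟨le_rfl, hp2⟩ ⟨hp2, le_rfl⟩
    intro t ht
    have h1 : pdy (pdx w) (p.1, t) = fderiv ℝ g (p.1, t) (0, 1) := by
      rw [hpdxw]
      exact (keyy hgd p.1 t).deriv
    rw [Real.norm_eq_abs]; beta_reduce; rw [← h1]
    exact hxy _ (memv t ht)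
  -- horizontal bound
  have memh : ∀ t ∈ Icc xi (xi + hx), (t, yj) ∈ tri xi yj hx hy := by
    intro t ht
    refine ⟨ht.1, le_rfl, ?_⟩
    rw [sub_self, zero_div, add_zero]
    exact (div_le_one hhx).mpr (by linarith [ht.2])
  have bh : ‖g (p.1, yj) - g (ξ, yj)‖ ≤ M20 * ‖p.1 - ξ‖ := by
    refine Convex.norm_image_sub_le_of_norm_hasDerivWithin_le
      (f := fun t => g (t, yj)) (f' := fun t => fderiv ℝ g (t, yj) (1, 0))
      (s := Icc xi (xi + hx)) (fun t ht => (keyx hgd t yj).hasDerivWithinAt) ?_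
      (convex_Icc _ _) ⟨hξ.1.le, hξ.2.le⟩ ⟨hp1, by linarith⟩
    intro t ht
    have h1 : pdx (pdx w) (t, yj) = fderiv ℝ g (t, yj) (1, 0) := by
      rw [hpdxw]
      exact (keyx hgd t yj).deriv
    rw [Real.norm_eq_abs]; beta_reduce; rw [← h1]
    exact hxx _ (memh t ht)
  have hn1 : ‖p.2 - yj‖ ≤ hy := by
    rw [Real.norm_eq_abs, abs_of_nonneg (by linarith)]; linarith
  have hn2 : ‖p.1 - ξ‖ ≤ hx := by
    rw [Real.norm_eq_abs, abs_sub_le_iff]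
    constructor <;> [linarith [hξ.1]; linarith [hξ.2]]
  have step : |g p - g (ξ, yj)| ≤ M11 * hy + M20 * hx := by
    have tineq : |g p - g (ξ, yj)|
        ≤ ‖g (p.1, p.2) - g (p.1, yj)‖ + ‖g (p.1, yj) - g (ξ, yj)‖ := by
      rw [Real.norm_eq_abs, Real.norm_eq_abs]
      have : g p = g (p.1, p.2) := by rw [Prod.mk.eta]
      rw [this]
      exact abs_sub_le _ _ _
    have b1 : ‖g (p.1, p.2) - g (p.1, yj)‖ ≤ M11 * hy :=
      bv.trans (by nlinarith [norm_nonneg (p.2 - yj)])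
    have b2 : ‖g (p.1, yj) - g (ξ, yj)‖ ≤ M20 * hx :=
      bh.trans (by nlinarith [norm_nonneg (p.1 - ξ)])
    linarith
  linarith
end
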